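/- Let f : ℝ_+^k → int(ℝ_+^k) be a continuous positive concave mapping with fixed point x* ∈ int(ℝ_+^k), let U ⊂ int(ℝ_+^k) be a compact neighborhood of x*, let c ∈ [0,1) be a local contraction factor of f on U (with respect to Thompson's metric), and let ρ := ρ(f_∞) be the spectral radius of the asymptotic mapping f_∞(x) = lim_{p→∞} f(px)/p. Then c ≥ ρ. -/

import Mathlib

open Filter Topology Set

noncomputable def Mratio {k : ℕ} (x y : Fin k → ℝ) : ℝ :=
  sInf {β : ℝ | 0 < β ∧ ∀ i, x i ≤ β * y i}

noncomputable def dT {k : ℕ} (x y : Fin k → ℝ) : ℝ :=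
  Real.log (max (Mratio x y) (Mratio y x))

def posOrth (k : ℕ) : Set (Fin k → ℝ) := {x | ∀ i, 0 < x i}

def nonnegOrth (k : ℕ) : Set (Fin k → ℝ) := {x | ∀ i, 0 ≤ x i}

lemma Mratio_le {k : ℕ} {x y : Fin k → ℝ} {β : ℝ} (hβ : 0 < β)
    (h : ∀ i, x i ≤ β * y i) : Mratio x y ≤ β :=
  csInf_le ⟨0, fun _ hb => le_of_lt hb.1⟩ ⟨hβ, h⟩

lemma le_Mratio {k : ℕ} {x y : Fin k → ℝ} {b : ℝ}
    (hne : ∃ β : ℝ, 0 < β ∧ ∀ i, x i ≤ β * y i)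
    (h : ∀ β : ℝ, 0 < β → (∀ i, x i ≤ β * y i) → b ≤ β) : b ≤ Mratio x y := by
  apply le_csInf
  · obtain ⟨β, hβ⟩ := hne; exact ⟨β, hβ⟩
  · rintro β ⟨h1, h2⟩; exact h β h1 h2

lemma tendsto_log_one_add_mul_div (a : ℝ) :
    Tendsto (fun s : ℝ => Real.log (1 + a*s)/s) (𝓝[>](0:ℝ)) (𝓝 a) := by
  have h1 : HasDerivAt (fun s : ℝ => 1 + a*s) a 0 := by
    simpa using ((hasDerivAt_id (0:ℝ)).const_mul a).const_add 1
  have h2 : HasDerivAt (fun s : ℝ => Real.log (1 + a*s)) a 0 := by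
    have := h1.log (by norm_num : (1:ℝ) + a*0 ≠ 0)
    simpa using this
  have h3 := hasDerivAt_iff_tendsto_slope.mp h2
  have h4 : 𝓝[>](0:ℝ) ≤ 𝓝[≠](0:ℝ) := nhdsWithin_mono _ (fun x hx => ne_of_gt hx)
  refine (h3.mono_left h4).congr' ?_
  filter_upwards [self_mem_nhdsWithin] with s hs
  simp [slope_def_field, Real.log_one]

/-- Proposition 6: any local contraction factor c of a continuous
positive concave mapping around its fixed point is bounded below by the spectral
radius ρ of its asymptotic mapping. -/
theorem stmt14 {k : ℕ} (f finf : (Fin k → ℝ) → (Fin k → ℝ))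
    (hpos : ∀ x ∈ nonnegOrth k, f x ∈ posOrth k)
    (hcont : ContinuousOn f (nonnegOrth k))
    (hconc : ∀ x ∈ nonnegOrth k, ∀ y ∈ nonnegOrth k, ∀ t : ℝ, 0 < t → t < 1 →
      t • f x + (1 - t) • f y ≤ f (t • x + (1 - t) • y))
    (xstar : Fin k → ℝ) (hxstar : xstar ∈ posOrth k) (hfix : f xstar = xstar)
    (U : Set (Fin k → ℝ)) (hU : U ⊆ posOrth k) (hUc : IsCompact U)
    (hUnbhd : U ∈ nhds xstar)
    (c : ℝ) (hc0 : 0 ≤ c) (hc1 : c < 1)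
    (hcontr : ∀ x ∈ U, ∀ y ∈ U, dT (f x) (f y) ≤ c * dT x y)
    (hlim : ∀ x ∈ nonnegOrth k,
      Tendsto (fun p : ℝ => p⁻¹ • f (p • x)) atTop (nhds (finf x)))
    (ρ : ℝ)
    (hρ : IsGreatest {l : ℝ | 0 ≤ l ∧ ∃ x ∈ nonnegOrth k, x ≠ 0 ∧ finf x = l • x} ρ) :
    ρ ≤ c := by
  obtain ⟨⟨hρ0, u, hu, hune, hfu⟩, -⟩ := hρ
  -- a coordinate where u is positive
  have hex : ∃ j, u j ≠ 0 := by
    by_contra h; push_neg at h; exact hune (funext h)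
  obtain ⟨j, hj⟩ := hex
  have hjpos : 0 < u j := lt_of_le_of_ne (hu j) (Ne.symm hj)
  have hne : (Finset.univ : Finset (Fin k)).Nonempty := ⟨j, Finset.mem_univ j⟩
  obtain ⟨i0, -, hi0⟩ := Finset.exists_max_image Finset.univ (fun i => u i / xstar i) hne
  set m : ℝ := u i0 / xstar i0 with hm
  have hmpos : 0 < m :=
    lt_of_lt_of_le (div_pos hjpos (hxstar j)) (hi0 j (Finset.mem_univ j))
  have hum : ∀ i, u i ≤ m * xstar i := fun i =>
    (div_le_iff₀ (hxstar i)).mp (hi0 i (Finset.mem_univ i))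
  have hui0 : m * xstar i0 = u i0 := by
    rw [hm, div_mul_cancel₀ _ (ne_of_gt (hxstar i0))]
  have hxnn : xstar ∈ nonnegOrth k := fun i => le_of_lt (hxstar i)
  -- key concavity estimate: f (xstar + s • u) ≥ xstar + (s*ρ) • u
  have hkey : ∀ s : ℝ, 0 < s → ∀ i, xstar i + s * (ρ * u i) ≤ f (xstar + s • u) i := by
    intro s hs i
    set z : Fin k → ℝ := xstar + s • u with hz
    have hznn : z ∈ nonnegOrth k := by
      intro i'
      have : 0 ≤ s * u i' := mul_nonneg hs.le (hu i')
      simpa [hz] using add_nonneg (hxnn i') this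
    -- the approximating points
    set g : ℝ → Fin k → ℝ := fun p => (1 - s/p) • xstar + s • u with hg
    have hgt : Tendsto g atTop (𝓝 z) := by
      have hd : Tendsto (fun p : ℝ => s / p) atTop (𝓝 0) :=
        tendsto_const_nhds.div_atTop tendsto_id
      have h1 : Tendsto (fun p : ℝ => (1 - s/p)) atTop (𝓝 1) := by
        simpa using tendsto_const_nhds.sub hd
      have h2 : Tendsto (fun p : ℝ => (1 - s/p) • xstar) atTop (𝓝 ((1:ℝ) • xstar)) :=
        h1.smul_const xstar
      have := h2.add_const (s • u)
      simpa [hz, hg] using this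
    have hgmem : ∀ᶠ p : ℝ in atTop, g p ∈ nonnegOrth k := by
      filter_upwards [eventually_ge_atTop (max s 1)] with p hp i'
      have hp1 : (1:ℝ) ≤ p := le_trans (le_max_right s 1) hp
      have hps : s ≤ p := le_trans (le_max_left s 1) hp
      have hppos : (0:ℝ) < p := lt_of_lt_of_le one_pos hp1
      have h01 : 0 ≤ 1 - s/p := by
        have : s / p ≤ 1 := (div_le_one hppos).mpr hps
        linarith
      have : 0 ≤ (1 - s/p) * xstar i' + s * u i' :=
        add_nonneg (mul_nonneg h01 (hxnn i')) (mul_nonneg hs.le (hu i'))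
      simpa [hg] using this
    have hftend : Tendsto (fun p => f (g p)) atTop (𝓝 (f z)) := by
      have hwz : Tendsto g atTop (𝓝[nonnegOrth k] z) :=
        tendsto_nhdsWithin_iff.mpr ⟨hgt, hgmem⟩
      exact (hcont z hznn).tendsto.comp hwz
    have hftendi : Tendsto (fun p => f (g p) i) atTop (𝓝 (f z i)) :=
      ((continuous_apply i).continuousAt.tendsto).comp hftend
    -- the lower approximants
    have hlimu := hlim u hu
    have hlimui : Tendsto (fun p : ℝ => (p⁻¹ • f (p • u)) i) atTop (𝓝 (finf u i)) :=
      ((continuous_apply i).continuousAt.tendsto).comp hlimu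
    have hlow : Tendsto (fun p : ℝ => (1 - s/p) * xstar i + s * ((p⁻¹ • f (p • u)) i))
        atTop (𝓝 (xstar i + s * (ρ * u i))) := by
      have hd : Tendsto (fun p : ℝ => s / p) atTop (𝓝 0) :=
        tendsto_const_nhds.div_atTop tendsto_id
      have h1' : Tendsto (fun p : ℝ => (1 - s/p)) atTop (𝓝 (1:ℝ)) := by
        simpa using (tendsto_const_nhds (x := (1:ℝ))).sub hd
      have h1 : Tendsto (fun p : ℝ => (1 - s/p) * xstar i) atTop (𝓝 (xstar i)) := by
        simpa using h1'.mul_const (xstar i)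
      have h2 : Tendsto (fun p : ℝ => s * ((p⁻¹ • f (p • u)) i)) atTop (𝓝 (s * finf u i)) :=
        hlimui.const_mul s
      have hfin : finf u i = ρ * u i := by rw [hfu]; simp
      have := h1.add h2
      rw [hfin] at this
      exact this
    -- eventual inequality
    have hineq : ∀ᶠ p : ℝ in atTop,
        (1 - s/p) * xstar i + s * ((p⁻¹ • f (p • u)) i) ≤ f (g p) i := by
      filter_upwards [eventually_ge_atTop (max (s+1) 1)] with p hp
      have hp1 : (1:ℝ) ≤ p := le_trans (le_max_right _ 1) hp
      have hps : s + 1 ≤ p := le_trans (le_max_left _ 1) hp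
      have hppos : (0:ℝ) < p := lt_of_lt_of_le one_pos hp1
      have ht0 : 0 < s / p := div_pos hs hppos
      have ht1 : s / p < 1 := (div_lt_one hppos).mpr (by linarith)
      have hpu : (p • u) ∈ nonnegOrth k := fun i' => by
        simpa using mul_nonneg hppos.le (hu i')
      have hc := hconc (p • u) hpu xstar hxnn (s/p) ht0 ht1
      have harg : (s/p) • (p • u) + (1 - s/p) • xstar = g p := by
        rw [smul_smul, div_mul_cancel₀ _ (ne_of_gt hppos)]
        simp [hg]; abel
      rw [harg, hfix] at hc
      have hci := hc i
      have hval : ((s/p) • f (p • u) + (1 - s/p) • xstar) i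
          = (1 - s/p) * xstar i + s * ((p⁻¹ • f (p • u)) i) := by
        simp [Pi.add_apply, Pi.smul_apply, smul_eq_mul]
        ring
      rw [hval] at hci
      exact hci
    exact le_of_tendsto_of_tendsto hlow hftendi hineq
  -- x* belongs to U and nearby points x* + s u belong to U
  have hxU : xstar ∈ U := mem_of_mem_nhds hUnbhd
  have hzU : ∀ᶠ s : ℝ in 𝓝[>] (0:ℝ), xstar + s • u ∈ U := by
    have hcs : Tendsto (fun s : ℝ => xstar + s • u) (𝓝 0) (𝓝 xstar) := by
      have : Continuous (fun s : ℝ => xstar + s • u) := by continuity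
      have := this.tendsto 0
      simpa using this
    have := hcs.eventually (eventually_mem_nhds_iff.mpr hUnbhd)
    exact (this.filter_mono nhdsWithin_le_nhds).mono (fun s hs => mem_of_mem_nhds hs)
  -- main inequality for small positive s
  have hmain : ∀ᶠ s : ℝ in 𝓝[>] (0:ℝ),
      Real.log (1 + (ρ*m)*s) ≤ c * Real.log (1 + m*s) := by
    filter_upwards [hzU, self_mem_nhdsWithin] with s hsU hs
    have hs : 0 < s := hs
    set z : Fin k → ℝ := xstar + s • u with hz
    have hznn : z ∈ nonnegOrth k := by
      intro i
      have : 0 ≤ s * u i := mul_nonneg hs.le (hu i)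
      simpa [hz] using add_nonneg (hxnn i) this
    have hzge : ∀ i, xstar i ≤ z i := by
      intro i
      have : 0 ≤ s * u i := mul_nonneg hs.le (hu i)
      simp [hz]; linarith
    have h1m : (1:ℝ) ≤ 1 + m*s := by nlinarith
    have h1ρm : (0:ℝ) < 1 + (ρ*m)*s := by nlinarith
    -- upper bound on dT z xstar
    have hM1 : Mratio z xstar ≤ 1 + m*s := by
      apply Mratio_le (lt_of_lt_of_le one_pos h1m)
      intro i
      have := hum i
      have hxi := hxstar i
      simp [hz]; nlinarith
    have hM2 : Mratio xstar z ≤ 1 + m*s := by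
      apply Mratio_le (lt_of_lt_of_le one_pos h1m)
      intro i
      have h1 := hzge i
      have h2 : 0 < z i := lt_of_lt_of_le (hxstar i) h1
      nlinarith
    have hdTz : dT z xstar ≤ Real.log (1 + m*s) := by
      have hmax : max (Mratio z xstar) (Mratio xstar z) ≤ 1 + m*s := max_le hM1 hM2
      -- positivity of the max
      have hMge1 : (1:ℝ) ≤ Mratio z xstar := by
        apply le_Mratio ⟨1 + m*s, lt_of_lt_of_le one_pos h1m, fun i => by
          have := hum i; have hxi := hxstar i; simp [hz]; nlinarith⟩
        intro β hβ hβi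
        have := hβi i0
        have h1 := hzge i0
        have hxi := hxstar i0
        nlinarith
      have hpos' : (0:ℝ) < max (Mratio z xstar) (Mratio xstar z) :=
        lt_of_lt_of_le one_pos (le_trans hMge1 (le_max_left _ _))
      exact Real.log_le_log hpos' hmax
    -- lower bound on dT (f z) xstar
    have hfz := hpos z hznn
    have hMlow : 1 + (ρ*m)*s ≤ Mratio (f z) xstar := by
      apply le_Mratio
      · refine ⟨(∑ i, f z i / xstar i) + 1, ?_, ?_⟩
        · have : (0:ℝ) ≤ ∑ i, f z i / xstar i :=
            Finset.sum_nonneg (fun i _ => le_of_lt (div_pos (hfz i) (hxstar i)))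
          linarith
        · intro i
          have hle : f z i / xstar i ≤ (∑ i', f z i' / xstar i') + 1 := by
            have := Finset.single_le_sum
              (f := fun i' => f z i' / xstar i')
              (fun i' _ => le_of_lt (div_pos (hfz i') (hxstar i'))) (Finset.mem_univ i)
            linarith
          exact (div_le_iff₀ (hxstar i)).mp (le_trans (le_refl _) hle) |>.trans_eq rfl
      · intro β hβ hβi
        have hk := hkey s hs i0
        have hβ0 := hβi i0
        have hxi := hxstar i0
        have hval : s * (ρ * u i0) = (ρ*m)*s * xstar i0 := by
          rw [← hui0]; ring
        rw [← hz] at hk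
        nlinarith [hk, hβ0]
    have hdTf : Real.log (1 + (ρ*m)*s) ≤ dT (f z) xstar := by
      have : 1 + (ρ*m)*s ≤ max (Mratio (f z) xstar) (Mratio xstar (f z)) :=
        le_trans hMlow (le_max_left _ _)
      exact Real.log_le_log h1ρm this
    -- combine with contraction
    have hcon := hcontr z hsU xstar hxU
    rw [hfix] at hcon
    calc Real.log (1 + (ρ*m)*s) ≤ dT (f z) xstar := hdTf
      _ ≤ c * dT z xstar := hcon
      _ ≤ c * Real.log (1 + m*s) := by
          apply mul_le_mul_of_nonneg_left hdTz hc0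
  -- divide by s and take the limit s → 0⁺
  have hdiv : ∀ᶠ s : ℝ in 𝓝[>] (0:ℝ),
      Real.log (1 + (ρ*m)*s)/s ≤ c * (Real.log (1 + m*s)/s) := by
    filter_upwards [hmain, self_mem_nhdsWithin] with s h hs
    have hs : 0 < s := hs
    calc Real.log (1 + (ρ*m)*s)/s ≤ (c * Real.log (1 + m*s))/s := by gcongr
      _ = c * (Real.log (1 + m*s)/s) := mul_div_assoc _ _ _
  have hlim1 := tendsto_log_one_add_mul_div (ρ*m)
  have hlim2 := (tendsto_log_one_add_mul_div m).const_mul c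
  have hfinal : ρ * m ≤ c * m := le_of_tendsto_of_tendsto hlim1 hlim2 hdiv
  exact le_of_mul_le_mul_right hfinal hmpos
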